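/- arXiv:2506.18582 — 5 statements merged into one kernel-verified Lean document; each statement's English description precedes it below -/
import Mathlib

section
/- Inductive step of Theorem 1: let k, t : ℕ with t ≥ k, and suppose that for every j ≤ k and every iteration index s ≥ j we have g s j = h j. Then g (t+1) (k+1) = h (k+1), and moreover g (t+1) j = h j for every j ≤ k+1. -/
/-- Inductive step of Theorem 1 (PCCoT ≡ continuous CoT):
if `t ≥ k` and for every `j ≤ k` and every iteration index `s ≥ j` we have
`g s j = h j`, then `g (t+1) (k+1) = h (k+1)`, and moreover `g (t+1) j = h j`
for every `j ≤ k + 1`. Here `f` models a causal transformer, `E` the query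
(and begin-of-thought) embeddings, `L` the dummy latent embedding, `h` the
continuous-CoT latent states and `g` the PCCoT states. -/
theorem pccot_inductive_step {V : Type*} (f : List V → V) (E : List V) (L : V)
    (h : ℕ → V) (g : ℕ → ℕ → V)
    (hh0 : h 0 = f E)
    (hhs : ∀ i : ℕ, h (i + 1) = f (E ++ (List.range (i + 1)).map h))
    (hg0 : ∀ i : ℕ, g 0 i = f (E ++ List.replicate i L))
    (hgs : ∀ t i : ℕ, g (t + 1) i = f (E ++ (List.range i).map (g t)))
    (k t : ℕ) (htk : t ≥ k)
    (ih : ∀ j : ℕ, j ≤ k → ∀ s : ℕ, s ≥ j → g s j = h j) :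
    g (t + 1) (k + 1) = h (k + 1) ∧ ∀ j : ℕ, j ≤ k + 1 → g (t + 1) j = h j := by
  have main : g (t + 1) (k + 1) = h (k + 1) := by
    rw [hgs, hhs]
    congr 1
    congr 1
    apply List.map_congr_left
    intro j hj
    rw [List.mem_range] at hj
    exact ih j (Nat.lt_succ_iff.mp hj) t (le_trans (Nat.lt_succ_iff.mp hj) htk)
  refine ⟨main, fun j hj => ?_⟩
  rcases Nat.lt_succ_iff_lt_or_eq.mp (Nat.lt_succ_of_le hj) with hlt | heq
  · exact ih j (Nat.lt_succ_iff.mp hlt) (t+1) (le_trans (Nat.le_of_lt_succ hlt) (Nat.le_succ_of_le htk))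
  · rw [heq]; exact main
end

section
/- Jacobi-iteration invariant: for all i, t : ℕ with t ≥ i, the PCCoT state at latent position i after t iterations equals the continuous-CoT state at that position, i.e. g t i = h i. (Paper's statement: h^{(t)}_{n+i} = h_{n+i} for all t ≥ i and i = 1, 2, …, c+1.) -/
/-- Jacobi-iteration invariant: for all `i t : ℕ` with `t ≥ i`, the PCCoT
state at latent position `i` after `t` iterations equals the continuous-CoT
state at that position, i.e. `g t i = h i`. Here `f` models a causal
transformer, `E` the query (and begin-of-thought) embeddings, `L` the dummy
latent embedding, `h` the continuous-CoT latent states and `g` the PCCoT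
states (iteration index first, latent position second). -/
theorem pccot_invariant {V : Type*} (f : List V → V) (E : List V) (L : V)
    (h : ℕ → V) (g : ℕ → ℕ → V)
    (hh0 : h 0 = f E)
    (hhs : ∀ i : ℕ, h (i + 1) = f (E ++ (List.range (i + 1)).map h))
    (hg0 : ∀ i : ℕ, g 0 i = f (E ++ List.replicate i L))
    (hgs : ∀ t i : ℕ, g (t + 1) i = f (E ++ (List.range i).map (g t))) :
    ∀ i t : ℕ, t ≥ i → g t i = h i := by
  suffices H : ∀ t i : ℕ, i ≤ t → g t i = h i by
    intro i t hti; exact H t i hti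
  intro t
  induction t with
  | zero =>
    intro i hi
    interval_cases i
    simp [hg0, hh0]
  | succ t ih =>
    intro i hi
    have hmap : (List.range i).map (g t) = (List.range i).map h := by
      apply List.map_congr_left
      intro j hj
      have := List.mem_range.mp hj; exact ih j (by omega)
    cases i with
    | zero => simp [hgs, hh0]
    | succ k =>
      rw [hgs, hmap, hhs]
end

section
/- Theorem 1 (equivalence of PCCoT and continuous CoT): let c : ℕ be the number of latent thought tokens and T : ℕ the number of extra Jacobi iterations. If T ≥ c, then for every latent position i ≤ c the PCCoT state after T extra iterations equals the continuous-CoT state at that position: g T i = h i. Hence the computation graph of PCCoT with c latent thought tokens and T ≥ c extra iterations is equivalent to that of continuous CoT with c latent thought tokens. -/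
/-- Theorem 1 (equivalence of PCCoT and continuous CoT): if the number of
extra Jacobi iterations `T` satisfies `T ≥ c` where `c` is the number of
latent thought tokens, then for every latent position `i ≤ c` the PCCoT state
after `T` extra iterations equals the continuous-CoT state at that position:
`g T i = h i`. Here `f` models a causal transformer, `E` the query (and
begin-of-thought) embeddings, `L` the dummy latent embedding, `h` the
continuous-CoT latent states and `g` the PCCoT states. -/
theorem pccot_equiv_continuous_cot {V : Type*} (f : List V → V) (E : List V) (L : V)
    (h : ℕ → V) (g : ℕ → ℕ → V)
    (hh0 : h 0 = f E)
    (hhs : ∀ i : ℕ, h (i + 1) = f (E ++ (List.range (i + 1)).map h))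
    (hg0 : ∀ i : ℕ, g 0 i = f (E ++ List.replicate i L))
    (hgs : ∀ t i : ℕ, g (t + 1) i = f (E ++ (List.range i).map (g t)))
    (c T : ℕ) (hTc : T ≥ c) :
    ∀ i : ℕ, i ≤ c → g T i = h i := by
  have key : ∀ t : ℕ, ∀ i : ℕ, i ≤ t → g t i = h i := by
    intro t
    induction t with
    | zero =>
      intro i hi
      interval_cases i
      simp [hg0, hh0]
    | succ t ih =>
      intro i hi
      rw [hgs]
      have hmap : (List.range i).map (g t) = (List.range i).map h := by
        apply List.map_congr_left
        intro j hj
        have hj' := List.mem_range.mp hj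
        exact ih j (by omega)
      rw [hmap]
      cases i with
      | zero => simp [hh0]
      | succ k => rw [hhs k]
  intro i hi
  exact key T i (le_trans hi hTc)
end

section
/- Per-token fixed point: for all i, t : ℕ with t ≥ i, one Jacobi iteration does not change the state at latent position i, i.e. g (t+1) i = g t i. In other words, the i-th latent thought token reaches a fixed point after i extra iterations. -/
/-- Per-token fixed point: for all `i t : ℕ` with `t ≥ i`, one Jacobi
iteration does not change the PCCoT state at latent position `i`, i.e.
`g (t+1) i = g t i`; the `i`-th latent thought token reaches a fixed point
after `i` extra iterations. Here `f` models a causal transformer, `E` the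
query (and begin-of-thought) embeddings, `L` the dummy latent embedding,
`h` the continuous-CoT latent states and `g` the PCCoT states. -/
theorem pccot_per_token_fixed_point {V : Type*} (f : List V → V) (E : List V) (L : V)
    (h : ℕ → V) (g : ℕ → ℕ → V)
    (hh0 : h 0 = f E)
    (hhs : ∀ i : ℕ, h (i + 1) = f (E ++ (List.range (i + 1)).map h))
    (hg0 : ∀ i : ℕ, g 0 i = f (E ++ List.replicate i L))
    (hgs : ∀ t i : ℕ, g (t + 1) i = f (E ++ (List.range i).map (g t))) :
    ∀ i t : ℕ, t ≥ i → g (t + 1) i = g t i := by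
  intro i
  induction i using Nat.strong_induction_on with
  | _ i ih =>
    intro t ht
    cases t with
    | zero =>
      interval_cases i
      simp [hgs, hg0]
    | succ t' =>
      rw [hgs, hgs]
      congr 1
      congr 1
      apply List.map_congr_left
      intro j hj
      rw [List.mem_range] at hj
      exact ih j hj t' (Nat.lt_succ_iff.mp (lt_of_lt_of_le hj ht))
end

section
/- Global fixed point after c iterations: let c : ℕ be the number of latent thought tokens. For every t ≥ c and every latent position i ≤ c, one further Jacobi iteration changes nothing: g (t+1) i = g t i. That is, the entire vector of PCCoT latent states on positions 0, …, c is a fixed point of the Jacobi update from iteration c onward. -/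
lemma pccot_key {V : Type*} (f : List V → V) (E : List V) (L : V)
    (h : ℕ → V) (g : ℕ → ℕ → V)
    (hh0 : h 0 = f E)
    (hhs : ∀ i : ℕ, h (i + 1) = f (E ++ (List.range (i + 1)).map h))
    (hg0 : ∀ i : ℕ, g 0 i = f (E ++ List.replicate i L))
    (hgs : ∀ t i : ℕ, g (t + 1) i = f (E ++ (List.range i).map (g t))) :
    ∀ t : ℕ, ∀ i : ℕ, i ≤ t → g t i = h i := by
  intro t
  induction t with
  | zero =>
    intro i hi
    interval_cases i
    rw [hg0]
    simpa using hh0.symm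
  | succ t ih =>
    intro i hi
    rw [hgs]
    have hmap : (List.range i).map (g t) = (List.range i).map h := by
      apply List.map_congr_left
      intro j hj
      exact ih j (by simp at hj; omega)
    rw [hmap]
    cases i with
    | zero => simpa using hh0.symm
    | succ k => exact (hhs k).symm

/-- Global fixed point after `c` iterations: for the number of latent thought
tokens `c`, for every `t ≥ c` and every latent position `i ≤ c`, one further
Jacobi iteration changes nothing: `g (t+1) i = g t i`. That is, the vector of
PCCoT latent states on positions `0, …, c` is a fixed point of the Jacobi
update from iteration `c` onward. Here `f` models a causal transformer, `E`
the query (and begin-of-thought) embeddings, `L` the dummy latent embedding,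
`h` the continuous-CoT latent states and `g` the PCCoT states. -/
theorem pccot_global_fixed_point {V : Type*} (f : List V → V) (E : List V) (L : V)
    (h : ℕ → V) (g : ℕ → ℕ → V)
    (hh0 : h 0 = f E)
    (hhs : ∀ i : ℕ, h (i + 1) = f (E ++ (List.range (i + 1)).map h))
    (hg0 : ∀ i : ℕ, g 0 i = f (E ++ List.replicate i L))
    (hgs : ∀ t i : ℕ, g (t + 1) i = f (E ++ (List.range i).map (g t)))
    (c : ℕ) :
    ∀ t : ℕ, t ≥ c → ∀ i : ℕ, i ≤ c → g (t + 1) i = g t i := by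
  intro t ht i hi
  have key := pccot_key f E L h g hh0 hhs hg0 hgs
  rw [key (t+1) i (by omega), key t i (by omega)]
end
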